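/- For every integer n ≥ 2, one has log g(n) ≤ θ(P⁺(g(n))) + S(q), where q is the smallest prime strictly greater than P⁺(g(n)) and S(q) = Σ_{α=2}^{⌊log(2q)/log 2⌋} θ(q^{1/α} + 1). -/

import Mathlib

/-- Landau's function: the maximal order of a permutation of the symmetric group on `n` letters. -/
noncomputable def landau (n : ℕ) : ℕ :=
  Finset.univ.sup fun σ : Equiv.Perm (Fin n) => orderOf σ

/-- The largest prime factor of `m` (0 if `m` has no prime factor). -/
def maxPrimeFac (m : ℕ) : ℕ := m.primeFactors.sup id

/-- Chebyshev's function θ(x) = Σ_{p ≤ x, p prime} log p. -/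
noncomputable def chebTheta (x : ℝ) : ℝ :=
  ∑ p ∈ Finset.filter Nat.Prime (Finset.range (⌊x⌋₊ + 1)), Real.log p

/-- S(q) = Σ_{α=2}^{⌊log(2q)/log 2⌋} θ(q^{1/α} + 1). -/
noncomputable def Sfun (q : ℕ) : ℝ :=
  ∑ a ∈ Finset.Icc 2 ⌊Real.log (2 * q) / Real.log 2⌋₊,
    chebTheta ((q : ℝ) ^ ((1 : ℝ) / a) + 1)

lemma landau_pos (n : ℕ) : 1 ≤ landau n := by
  have h : orderOf (1 : Equiv.Perm (Fin n)) ≤ landau n :=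
    Finset.le_sup (Finset.mem_univ _)
  simpa using h

lemma multiset_lcm_ne_zero {c : Multiset ℕ} (hc : ∀ x ∈ c, x ≠ 0) : c.lcm ≠ 0 := by
  induction c using Multiset.induction_on with
  | empty => simp
  | cons a s ih =>
    rw [Multiset.lcm_cons]
    exact Nat.lcm_ne_zero (hc a (Multiset.mem_cons_self a s))
      (ih fun x hx => hc x (Multiset.mem_cons_of_mem hx))

lemma pp_dvd_of_dvd_lcm {p k : ℕ} (hp : p.Prime) (hk : k ≠ 0)
    (c : Multiset ℕ) (hc : ∀ x ∈ c, x ≠ 0) (h : p ^ k ∣ c.lcm) :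
    ∃ d ∈ c, p ^ k ∣ d := by
  induction c using Multiset.induction_on with
  | empty =>
    exfalso
    simp only [Multiset.lcm_zero] at h
    have h1 : p ^ k = 1 := Nat.dvd_one.mp h
    have : 1 < p ^ k := Nat.one_lt_pow hk hp.one_lt
    omega
  | cons a s ih =>
    have ha : a ≠ 0 := hc a (Multiset.mem_cons_self a s)
    have hs : ∀ x ∈ s, x ≠ 0 := fun x hx => hc x (Multiset.mem_cons_of_mem hx)
    have hs0 : s.lcm ≠ 0 := multiset_lcm_ne_zero hs
    rw [Multiset.lcm_cons] at h
    have hfac : k ≤ (Nat.lcm a s.lcm).factorization p :=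
      (hp.pow_dvd_iff_le_factorization (Nat.lcm_ne_zero ha hs0)).mp h
    rw [Nat.factorization_lcm ha hs0, Finsupp.sup_apply] at hfac
    rcases le_total (a.factorization p) (s.lcm.factorization p) with hle | hle
    · have : k ≤ s.lcm.factorization p := le_trans hfac (by simp; omega)
      obtain ⟨d, hd, hdd⟩ := ih hs ((hp.pow_dvd_iff_le_factorization hs0).mpr this)
      exact ⟨d, Multiset.mem_cons_of_mem hd, hdd⟩
    · have : k ≤ a.factorization p := le_trans hfac (by simp; omega)
      exact ⟨a, Multiset.mem_cons_self a s,
        (hp.pow_dvd_iff_le_factorization ha).mpr this⟩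

lemma landau_lower {n : ℕ} (c : Multiset ℕ) (h2 : ∀ x ∈ c, 2 ≤ x) (hsum : c.sum ≤ n) :
    c.lcm ≤ landau n := by
  obtain ⟨σ, hσ⟩ := (Equiv.Perm.exists_with_cycleType_iff (Fin n)).mpr
    ⟨by simpa using hsum, h2⟩
  have h : orderOf σ ≤ landau n := Finset.le_sup (Finset.mem_univ _)
  rwa [← Equiv.Perm.lcm_cycleType, hσ] at h

lemma swap_bound {n q : ℕ} (hn : 2 ≤ n) (hq : q.Prime)
    (hq1 : maxPrimeFac (landau n) < q) {p a : ℕ} (hp : p.Prime) (ha : 2 ≤ a)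
    (hdvd : p ^ a ∣ landau n) : p ^ (a - 1) * (p - 1) < q := by
  by_contra hle
  push_neg at hle
  set m := landau n with hm
  have hm1 : 1 ≤ m := landau_pos n
  have hm0 : m ≠ 0 := by omega
  have hfin : Nonempty (Fin n) := ⟨⟨0, by omega⟩⟩
  obtain ⟨σ, -, hσ⟩ := Finset.exists_mem_eq_sup (Finset.univ : Finset (Equiv.Perm (Fin n)))
    Finset.univ_nonempty (fun σ => orderOf σ)
  have hσ' : m = orderOf σ := hσ
  set c := σ.cycleType with hc
  have hlcm : c.lcm = m := by rw [Equiv.Perm.lcm_cycleType, hσ']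
  have h2 : ∀ x ∈ c, 2 ≤ x := fun x hx => Equiv.Perm.two_le_of_mem_cycleType hx
  have hne : ∀ x ∈ c, x ≠ 0 := fun x hx => by have := h2 x hx; omega
  have hsum : c.sum ≤ n := by
    rw [hc, Equiv.Perm.sum_cycleType]
    calc σ.support.card ≤ (Finset.univ : Finset (Fin n)).card := Finset.card_le_univ _
    _ = n := by simp
  obtain ⟨d, hdc, hpd⟩ := pp_dvd_of_dvd_lcm (k := a) hp (by omega) c hne (by rw [hlcm]; exact hdvd)
  have hd2 : 2 ≤ d := h2 d hdc
  have hpdvd : p ∣ d := dvd_trans (dvd_pow_self p (by omega : a ≠ 0)) hpd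
  have hdppos : 1 ≤ d / p := Nat.one_le_div_iff hp.pos |>.mpr (Nat.le_of_dvd (by omega) hpdvd)
  have hd_eq : p * (d / p) = d := Nat.mul_div_cancel' hpdvd
  have hdp : p ^ (a - 1) ∣ d / p := by
    have hpow : p * p ^ (a - 1) = p ^ a := by
      rw [← pow_succ']
      congr 1
      omega
    rw [Nat.dvd_div_iff_mul_dvd hpdvd, hpow]
    exact hpd
  have hdple : p ^ (a - 1) ≤ d / p := Nat.le_of_dvd (by omega) hdp
  have hp2 : 2 ≤ p := hp.two_le
  have hple : p ≤ p ^ (a - 1) := Nat.le_self_pow (by omega) p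
  -- new multiset
  set c' : Multiset ℕ := q ::ₘ (d / p) ::ₘ c.erase d with hc'
  have h2' : ∀ x ∈ c', 2 ≤ x := by
    intro x hx
    rw [hc', Multiset.mem_cons, Multiset.mem_cons] at hx
    rcases hx with rfl | rfl | hx
    · exact hq.two_le
    · omega
    · exact h2 x (Multiset.mem_of_mem_erase hx)
  have hsum' : c'.sum ≤ n := by
    have hcsum : c.sum = d + (c.erase d).sum := by
      conv_lhs => rw [← Multiset.cons_erase hdc]
      rw [Multiset.sum_cons]
    have hqd : q + d / p ≤ d := by
      have h1 : p ^ (a - 1) * (p - 1) ≤ (d / p) * (p - 1) :=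
        Nat.mul_le_mul_right _ hdple
      have h3 : (d / p) * (p - 1) + d / p = d := by
        have ht : (d / p) * p = d := Nat.div_mul_cancel hpdvd
        calc (d / p) * (p - 1) + d / p = (d / p) * (p - 1 + 1) := by ring
        _ = (d / p) * p := by congr 1; omega
        _ = d := ht
      omega
    have : c'.sum = q + (d / p + (c.erase d).sum) := by
      rw [hc', Multiset.sum_cons, Multiset.sum_cons]
    omega
  -- lcm of rest
  set L : ℕ := ((d / p) ::ₘ c.erase d).lcm with hL
  have hLdvdm : L ∣ m := by
    rw [hL]
    apply Multiset.lcm_dvd.mpr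
    intro b hb
    rw [Multiset.mem_cons] at hb
    rcases hb with rfl | hb
    · exact dvd_trans (Nat.div_dvd_of_dvd hpdvd) (hlcm ▸ Multiset.dvd_lcm hdc)
    · exact hlcm ▸ Multiset.dvd_lcm (Multiset.mem_of_mem_erase hb)
  have hL0 : L ≠ 0 := fun h0 => hm0 (by
    have := hLdvdm
    rw [h0] at this
    exact Nat.eq_zero_of_zero_dvd this)
  have hmdvd : m ∣ p * L := by
    rw [← hlcm]
    apply Multiset.lcm_dvd.mpr
    intro b hb
    rw [← Multiset.cons_erase hdc, Multiset.mem_cons] at hb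
    rcases hb with rfl | hb
    · rw [← hd_eq]
      exact mul_dvd_mul_left p (Multiset.dvd_lcm (Multiset.mem_cons_self _ _))
    · exact dvd_mul_of_dvd_right (Multiset.dvd_lcm (Multiset.mem_cons_of_mem hb)) p
  have hqnL : ¬ q ∣ L := by
    intro hqL
    have hqm : q ∣ m := hqL.trans hLdvdm
    have : q ≤ maxPrimeFac m :=
      Finset.le_sup (f := id) (Nat.mem_primeFactors.mpr ⟨hq, hqm, hm0⟩)
    omega
  have hcop : Nat.Coprime q L := (Nat.Prime.coprime_iff_not_dvd hq).mpr hqnL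
  have hlcm' : c'.lcm = q * L := by
    rw [hc', Multiset.lcm_cons, ← hL]
    exact hcop.lcm_eq_mul
  have hle2 : c'.lcm ≤ m := landau_lower c' h2' hsum'
  -- p < q
  have hpm : p ≤ maxPrimeFac m :=
    Finset.le_sup (f := id) (Nat.mem_primeFactors.mpr
      ⟨hp, (dvd_pow_self p (by omega : a ≠ 0)).trans hdvd, hm0⟩)
  have hpq : p + 1 ≤ q := by omega
  have h1 : m ≤ p * L := Nat.le_of_dvd (by positivity) hmdvd
  have h2' : (p + 1) * L ≤ q * L := Nat.mul_le_mul_right _ hpq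
  have h3 : m + 1 ≤ (p + 1) * L := by
    have hL1 : 1 ≤ L := by omega
    calc m + 1 ≤ p * L + L := by omega
    _ = (p + 1) * L := by ring
  rw [hlcm'] at hle2
  omega

lemma chebTheta_nonneg (x : ℝ) : 0 ≤ chebTheta x := by
  apply Finset.sum_nonneg
  intro p hp
  simp only [Finset.mem_filter] at hp
  exact Real.log_nonneg (by exact_mod_cast hp.2.one_lt.le)

lemma Sfun_nonneg (q : ℕ) : 0 ≤ Sfun q :=
  Finset.sum_nonneg fun _ _ => chebTheta_nonneg _

lemma bound_of_swap {p β q : ℕ} (hp : p.Prime) (hq : q.Prime) (hβ : 2 ≤ β)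
    (h : p ^ (β - 1) * (p - 1) < q) :
    (p : ℝ) ≤ (q : ℝ) ^ ((1 : ℝ) / β) + 1 ∧ β ≤ ⌊Real.log (2 * q) / Real.log 2⌋₊ := by
  have hp2 : 2 ≤ p := hp.two_le
  constructor
  · -- (p-1)^β ≤ q
    have hnat : (p - 1) ^ β ≤ q := by
      calc (p - 1) ^ β = (p - 1) ^ (β - 1) * (p - 1) := by
            rw [← pow_succ]; congr 1; omega
      _ ≤ p ^ (β - 1) * (p - 1) :=
            Nat.mul_le_mul_right _ (Nat.pow_le_pow_left (by omega) _)
      _ ≤ q := h.le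
    have hcast : ((p : ℝ) - 1) ^ β ≤ (q : ℝ) := by
      have : (((p - 1 : ℕ) : ℝ)) ^ β ≤ ((q : ℕ) : ℝ) := by exact_mod_cast hnat
      rwa [Nat.cast_sub (by omega), Nat.cast_one] at this
    have h0 : (0 : ℝ) ≤ (p : ℝ) - 1 := by
      have : (2 : ℝ) ≤ p := by exact_mod_cast hp2
      linarith
    have hβ0 : (β : ℝ) ≠ 0 := by positivity
    have hx : (p : ℝ) - 1 ≤ (q : ℝ) ^ ((1 : ℝ) / β) := by
      have h1 : (((p : ℝ) - 1) ^ β) ^ ((1 : ℝ) / β) ≤ (q : ℝ) ^ ((1 : ℝ) / β) :=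
        Real.rpow_le_rpow (by positivity) hcast (by positivity)
      rwa [← Real.rpow_natCast ((p : ℝ) - 1) β, ← Real.rpow_mul h0,
        mul_one_div, div_self hβ0, Real.rpow_one] at h1
    linarith
  · -- β ≤ K
    have h2q : 2 ^ β < 2 * q := by
      have h1 : 2 ^ (β - 1) * 1 ≤ p ^ (β - 1) * (p - 1) :=
        Nat.mul_le_mul (Nat.pow_le_pow_left hp2 _) (by omega)
      have h2 : 2 ^ β = 2 * 2 ^ (β - 1) := by
        rw [← pow_succ']; congr 1; omega
      omega
    have hq1 : (1 : ℕ) ≤ q := hq.one_le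
    have hlog : (β : ℝ) * Real.log 2 < Real.log (2 * q) := by
      have hc : ((2 : ℝ)) ^ β < 2 * (q : ℝ) := by exact_mod_cast h2q
      calc (β : ℝ) * Real.log 2 = Real.log ((2 : ℝ) ^ β) := by
            rw [Real.log_pow]
      _ < Real.log (2 * q) := Real.log_lt_log (by positivity) hc
    have hlog2 : (0 : ℝ) < Real.log 2 := Real.log_pos (by norm_num)
    apply Nat.le_floor
    rw [le_div_iff₀ hlog2]
    exact hlog.le


/-- For n ≥ 2, log g(n) ≤ θ(P⁺(g(n))) + S(q) where q is the prime following P⁺(g(n)). -/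
theorem stmt17 (n : ℕ) (hn : 2 ≤ n) (q : ℕ) (hq : q.Prime)
    (hq1 : maxPrimeFac (landau n) < q)
    (hq2 : ∀ r : ℕ, r.Prime → maxPrimeFac (landau n) < r → q ≤ r) :
    Real.log (landau n) ≤ chebTheta (maxPrimeFac (landau n) : ℝ) + Sfun q := by
  rcases le_or_gt (landau n) 1 with h1 | h1
  · have hlog : Real.log (landau n : ℝ) ≤ 0 :=
      Real.log_nonpos (by positivity) (by exact_mod_cast h1)
    exact hlog.trans (add_nonneg (chebTheta_nonneg _) (Sfun_nonneg q))
  · set m := landau n with hm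
    have hm0 : m ≠ 0 := by omega
    set P := maxPrimeFac m with hP
    set K := ⌊Real.log (2 * q) / Real.log 2⌋₊ with hK
    set F := m.primeFactors with hF
    set e : ℕ → ℕ := fun p => m.factorization p with he
    have hprodn : ∏ p ∈ F, p ^ e p = m := by
      rw [hF, ← Nat.support_factorization]
      exact Nat.factorization_prod_pow_eq_self hm0
    have step1 : Real.log (m : ℝ) = ∑ p ∈ F, (e p : ℝ) * Real.log p := by
      conv_lhs => rw [← hprodn]
      push_cast
      rw [Real.log_prod]
      · exact Finset.sum_congr rfl fun p hp => Real.log_pow _ _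
      · intro p hp
        have hp' := Nat.prime_of_mem_primeFactors hp
        have hpos : (0 : ℝ) < p := by exact_mod_cast hp'.pos
        positivity
    have heple : ∀ p ∈ F, e p ≤ m := fun p _ => (Nat.factorization_lt p hm0).le
    have step2 : ∑ p ∈ F, (e p : ℝ) * Real.log p
        = ∑ β ∈ Finset.Icc 1 m, ∑ p ∈ F.filter (fun p => β ≤ e p), Real.log p := by
      have hpoint : ∀ p ∈ F, (e p : ℝ) * Real.log p
          = ∑ β ∈ Finset.Icc 1 m, if β ≤ e p then Real.log (p : ℝ) else 0 := by
        intro p hpF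
        rw [← Finset.sum_filter]
        have hfe : (Finset.Icc 1 m).filter (fun β => β ≤ e p) = Finset.Icc 1 (e p) := by
          ext x
          simp only [Finset.mem_filter, Finset.mem_Icc]
          have := heple p hpF
          omega
        rw [hfe, Finset.sum_const, Nat.card_Icc]
        simp [nsmul_eq_mul]
      rw [Finset.sum_congr rfl hpoint, Finset.sum_comm]
      exact Finset.sum_congr rfl fun β _ => (Finset.sum_filter _ _).symm
    have hsplit : Finset.Icc 1 m = insert 1 (Finset.Icc 2 m) := by
      ext x
      simp only [Finset.mem_Icc, Finset.mem_insert]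
      omega
    have hswap : ∀ p β, p ∈ F → 2 ≤ β → β ≤ e p →
        (p : ℝ) ≤ (q : ℝ) ^ ((1 : ℝ) / β) + 1 ∧ β ≤ K := by
      intro p β hpF hβ2 hβe
      have hp := Nat.prime_of_mem_primeFactors hpF
      have hdvd : p ^ β ∣ m := (pow_dvd_pow p hβe).trans (Nat.ordProj_dvd m p)
      exact bound_of_swap hp hq hβ2 (swap_bound hn hq hq1 hp hβ2 hdvd)
    rw [step1, step2, hsplit, Finset.sum_insert (by simp)]
    apply add_le_add
    · have hfe : F.filter (fun p => 1 ≤ e p) = F := by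
        apply Finset.filter_true_of_mem
        intro p hpF
        have h := Nat.mem_primeFactors.mp hpF
        exact Nat.Prime.factorization_pos_of_dvd h.1 hm0 h.2.1
      rw [hfe]
      unfold chebTheta
      apply Finset.sum_le_sum_of_subset_of_nonneg
      · intro p hpF
        have h := Nat.mem_primeFactors.mp hpF
        simp only [Finset.mem_filter, Finset.mem_range]
        refine ⟨?_, h.1⟩
        have h2 : p ≤ P := Finset.le_sup (f := id) hpF
        have h3 : ⌊(P : ℝ)⌋₊ = P := Nat.floor_natCast P
        omega
      · intro p hp _
        simp only [Finset.mem_filter] at hp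
        exact Real.log_nonneg (by exact_mod_cast hp.2.one_lt.le)
    · calc ∑ β ∈ Finset.Icc 2 m, ∑ p ∈ F.filter (fun p => β ≤ e p), Real.log (p : ℝ)
          ≤ ∑ β ∈ Finset.Icc 2 m,
              (if β ∈ Finset.Icc 2 K then chebTheta ((q : ℝ) ^ ((1 : ℝ) / β) + 1) else 0) := by
            apply Finset.sum_le_sum
            intro β hβ
            simp only [Finset.mem_Icc] at hβ
            split_ifs with hmem
            · unfold chebTheta
              apply Finset.sum_le_sum_of_subset_of_nonneg
              · intro p hpmem
                simp only [Finset.mem_filter] at hpmem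
                obtain ⟨hpF, hβe⟩ := hpmem
                have hb := hswap p β hpF hβ.1 hβe
                have hp := Nat.prime_of_mem_primeFactors hpF
                simp only [Finset.mem_filter, Finset.mem_range]
                refine ⟨?_, hp⟩
                have := Nat.le_floor hb.1
                omega
              · intro p hp _
                simp only [Finset.mem_filter] at hp
                exact Real.log_nonneg (by exact_mod_cast hp.2.one_lt.le)
            · have hempty : F.filter (fun p => β ≤ e p) = ∅ := by
                apply Finset.filter_eq_empty_iff.mpr
                intro p hpF hβe
                exact hmem (Finset.mem_Icc.mpr ⟨hβ.1, (hswap p β hpF hβ.1 hβe).2⟩)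
              rw [hempty]
              simp
      _ = ∑ β ∈ Finset.Icc 2 m ∩ Finset.Icc 2 K, chebTheta ((q : ℝ) ^ ((1 : ℝ) / β) + 1) :=
            Finset.sum_ite_mem _ _ _
      _ ≤ Sfun q := by
            unfold Sfun
            apply Finset.sum_le_sum_of_subset_of_nonneg Finset.inter_subset_right
            intro β _ _
            exact chebTheta_nonneg _
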